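/- Consider a finite control system with transition f : Fin M → Fin N → Fin N and output h : Fin N → Fin P, and a T-periodic reference output trajectory y_r : ℕ → Fin P (i.e., y_r (t+T) = y_r t for all t), with T ≥ 1. Then the following are equivalent: (i) for every initial state x₀ there exists an infinite input sequence u : ℕ → Fin M such that the resulting infinite trajectory from x₀ satisfies h (x(t)) = y_r(t) for all t ≥ 1; (ii) for every initial state x₀ there exists a finite input sequence u : Fin T → Fin M such that the resulting trajectory from x₀ satisfies h (x(t)) = y_r(t) for all t ∈ [1, T]. -/

import Mathlib

/-- The state trajectory produced by input sequence `u` from initial state `x₀`. -/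
def traj {N M : ℕ} (f : Fin M → Fin N → Fin N) (u : ℕ → Fin M) (x₀ : Fin N) : ℕ → Fin N
  | 0 => x₀
  | t + 1 => f (u t) (traj f u x₀ t)

theorem stmt_5 {N M P T : ℕ} (hT : 1 ≤ T)
    (f : Fin M → Fin N → Fin N) (h : Fin N → Fin P)
    (yr : ℕ → Fin P) (hper : ∀ t, yr (t + T) = yr t) :
    (∀ x₀ : Fin N, ∃ u : ℕ → Fin M,
        ∀ t : ℕ, 1 ≤ t → h (traj f u x₀ t) = yr t) ↔
      (∀ x₀ : Fin N, ∃ (u : Fin T → Fin M) (x : Fin (T + 1) → Fin N),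
        x 0 = x₀ ∧ (∀ t : Fin T, x t.succ = f (u t) (x t.castSucc)) ∧
        ∀ t : Fin T, h (x t.succ) = yr ((t : ℕ) + 1)) := by
  classical
  have hT0 : 0 < T := hT
  have per : ∀ k r, yr (r + k * T) = yr r := by
    intro k r
    induction k with
    | zero => simp
    | succ k ih =>
      have : r + (k + 1) * T = (r + k * T) + T := by ring
      rw [this, hper, ih]
  constructor
  · intro H x₀
    obtain ⟨u, hu⟩ := H x₀
    refine ⟨fun t => u t, fun t => traj f u x₀ t, rfl, fun t => rfl, fun t => ?_⟩
    simpa using hu ((t : ℕ) + 1) (Nat.succ_le_succ (Nat.zero_le _))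
  · intro H
    -- Step A: single-period tracking with infinite input sequences
    have G : ∀ x₀ : Fin N, ∃ u : ℕ → Fin M,
        ∀ s, 1 ≤ s → s ≤ T → h (traj f u x₀ s) = yr s := by
      intro x₀
      obtain ⟨u, xs, hx0, hstep, hout⟩ := H x₀
      set u' : ℕ → Fin M := fun t => if ht : t < T then u ⟨t, ht⟩ else u ⟨0, hT0⟩ with hu'
      have key : ∀ s, (hs : s ≤ T) → traj f u' x₀ s = xs ⟨s, Nat.lt_succ_of_le hs⟩ := by
        intro s
        induction s with
        | zero => intro _; simpa [traj] using hx0.symm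
        | succ n ih =>
          intro hs
          have hn : n < T := hs
          have e1 : traj f u' x₀ (n + 1) = f (u' n) (traj f u' x₀ n) := rfl
          rw [e1, ih (le_of_lt hn)]
          have e2 := hstep ⟨n, hn⟩
          have : u' n = u ⟨n, hn⟩ := by simp [hu', hn]
          rw [this]
          exact (e2).symm ▸ rfl
      refine ⟨u', fun s hs1 hsT => ?_⟩
      rw [key s hsT]
      obtain ⟨m, rfl⟩ := Nat.exists_eq_add_of_le hs1
      have hm : m < T := by omega
      have := hout ⟨m, hm⟩
      simpa [Nat.add_comm] using this
    -- Step B: concatenation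
    intro x₀
    choose U hU using G
    let X : ℕ → Fin N := fun k => Nat.rec x₀ (fun _ xk => traj f (U xk) xk T) k
    have hXs : ∀ k, X (k + 1) = traj f (U (X k)) (X k) T := fun k => rfl
    set u : ℕ → Fin M := fun t => U (X (t / T)) (t % T) with hu
    have uval : ∀ k n, n < T → u (k * T + n) = U (X k) n := by
      intro k n hn
      have hdiv : (k * T + n) / T = k := by
        rw [Nat.add_comm, Nat.add_mul_div_right _ _ hT0, Nat.div_eq_of_lt hn]
        omega
      have hmod : (k * T + n) % T = n := by
        rw [Nat.add_comm, Nat.add_mul_mod_self_right, Nat.mod_eq_of_lt hn]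
      rw [hu]
      simp only [hdiv, hmod]
    have inner : ∀ k, traj f u x₀ (k * T) = X k →
        ∀ r, r ≤ T → traj f u x₀ (k * T + r) = traj f (U (X k)) (X k) r := by
      intro k hk r
      induction r with
      | zero => intro _; simpa [traj] using hk
      | succ n ih =>
        intro hr
        have hn : n < T := hr
        have e1 : traj f u x₀ (k * T + (n + 1)) = f (u (k * T + n)) (traj f u x₀ (k * T + n)) := rfl
        rw [e1, ih (le_of_lt hn), uval k n hn]
        rfl
    have base : ∀ k, traj f u x₀ (k * T) = X k := by
      intro k
      induction k with
      | zero => rw [Nat.zero_mul]; rfl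
      | succ k ih =>
        have : (k + 1) * T = k * T + T := by ring
        rw [this, inner k ih T le_rfl, hXs]
    refine ⟨u, fun t ht => ?_⟩
    by_cases hmod : t % T = 0
    · have hk1 : 1 ≤ t / T := by
        rcases Nat.eq_zero_or_pos (t / T) with h0 | h0
        · exfalso
          have := Nat.div_add_mod t T
          rw [h0, hmod] at this
          omega
        · exact h0
      set k := t / T - 1 with hk
      have hdvd : T ∣ t := Nat.dvd_of_mod_eq_zero hmod
      have htT : t / T * T = t := Nat.div_mul_cancel hdvd
      have hkk : t / T = k + 1 := by omega
      have ht' : t = k * T + T := by rw [← htT, hkk, Nat.succ_mul]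
      rw [ht', inner k (base k) T le_rfl]
      have := hU (X k) T hT le_rfl
      rw [this]
      have : (k * T + T : ℕ) = T + k * T := by ring
      rw [this, per]
    · set k := t / T with hk
      set r := t % T with hr
      have hrT : r < T := Nat.mod_lt _ hT0
      have ht' : t = k * T + r := by
        rw [hk, hr, Nat.mul_comm]
        exact (Nat.div_add_mod t T).symm
      rw [ht', inner k (base k) r (le_of_lt hrT)]
      have := hU (X k) r (by omega) (le_of_lt hrT)
      rw [this]
      have : (k * T + r : ℕ) = r + k * T := by ring
      rw [this, per]
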